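/- Let M be a matroid, let S, T be disjoint subsets of E(M), let k := κ_M(S,T), and let U ⊆ E(M) be a set with S ⊆ U, U ∩ T = ∅, and λ_M(U) = k. If e ∈ E(M) − (T ∪ U) is non-contractible with respect to (S,T) (i.e., κ_{M/e}(S,T) < k), then e is non-contractible with respect to (U,T) (i.e., κ_{M/e}(U,T) < κ_M(U,T) = k). -/

import Mathlib

open Set Matroid

namespace Intertwine

variable {α : Type*}

/-- The (extended) rank of a set in a matroid: the supremum of the cardinalities of its
independent subsets. -/
noncomputable def eRk (M : Matroid α) (X : Set α) : ℕ∞ :=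
  ⨆ I ∈ {I : Set α | M.Indep I ∧ I ⊆ X}, I.encard

/-- The connectivity function `λ_M(X) = r(X) + r(E \ X) - r(M)`. -/
noncomputable def lam (M : Matroid α) (X : Set α) : ℕ∞ :=
  eRk M X + eRk M (M.E \ X) - eRk M M.E

/-- The connectivity between `S` and `T`:
`κ_M(S,T) = min {λ_M(X) : S ⊆ X ⊆ E \ T}`. -/
noncomputable def kap (M : Matroid α) (S T : Set α) : ℕ∞ :=
  ⨅ X ∈ {X : Set α | S ⊆ X ∧ X ⊆ M.E \ T}, lam M X

/-- Deletion of a set of elements. -/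
def del (M : Matroid α) (D : Set α) : Matroid α := M ↾ (M.E \ D)

/-- Contraction of a set of elements, via duality: `M / C = (M* \ C)*`. -/
def con (M : Matroid α) (C : Set α) : Matroid α := (del M✶ C)✶

lemma encard_le_eRk {M : Matroid α} {I X : Set α} (hI : M.Indep I) (hIX : I ⊆ X) :
    I.encard ≤ eRk M X :=
  le_iSup₂_of_le I ⟨hI, hIX⟩ le_rfl

lemma eRk_le_of_forall {M : Matroid α} {X : Set α} {c : ℕ∞}
    (h : ∀ I, M.Indep I → I ⊆ X → I.encard ≤ c) : eRk M X ≤ c :=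
  iSup₂_le fun I hI => h I hI.1 hI.2

lemma eRk_basis {M : Matroid α} {I X : Set α} (hIX : M.IsBasis I X) :
    eRk M X = I.encard := by
  refine le_antisymm (eRk_le_of_forall fun J hJ hJX => ?_) (encard_le_eRk hIX.indep hIX.subset)
  obtain ⟨J₂, hJ₂, hJJ₂⟩ := hJ.subset_isBasis_of_subset hJX hIX.subset_ground
  rw [← hJ₂.restrict_isBase.encard_eq_encard_of_isBase hIX.restrict_isBase]
  exact encard_mono hJJ₂

lemma eRk_inter_ground (M : Matroid α) (X : Set α) : eRk M X = eRk M (X ∩ M.E) := by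
  refine le_antisymm (eRk_le_of_forall fun I hI hIX => encard_le_eRk hI
    (subset_inter hIX hI.subset_ground)) (eRk_le_of_forall fun I hI hIX =>
    encard_le_eRk hI (hIX.trans inter_subset_left))

lemma eRk_mono {M : Matroid α} {X Y : Set α} (h : X ⊆ Y) : eRk M X ≤ eRk M Y :=
  eRk_le_of_forall fun I hI hIX => encard_le_eRk hI (hIX.trans h)

lemma eRk_le_encard (M : Matroid α) (X : Set α) : eRk M X ≤ X.encard :=
  eRk_le_of_forall fun _ _ h => encard_mono h

lemma eRk_le_ground (M : Matroid α) (X : Set α) : eRk M X ≤ eRk M M.E :=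
  (eRk_inter_ground M X).le.trans (eRk_mono inter_subset_right)

lemma eRk_submod (M : Matroid α) {A B : Set α} (hA : A ⊆ M.E) (hB : B ⊆ M.E) :
    eRk M (A ∪ B) + eRk M (A ∩ B) ≤ eRk M A + eRk M B := by
  obtain ⟨I, hI⟩ := M.exists_isBasis (A ∩ B) ((inter_subset_left).trans hA)
  obtain ⟨J, hJ, hIJ⟩ := hI.indep.subset_isBasis_of_subset
    (hI.subset.trans ((inter_subset_left).trans subset_union_left))
    (union_subset hA hB)
  rw [eRk_basis hJ, eRk_basis hI]
  have hJU : (J ∩ A) ∪ (J ∩ B) = J := by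
    rw [← inter_union_distrib_left]; exact inter_eq_self_of_subset_left hJ.subset
  have h1 : J.encard + I.encard ≤ (J ∩ A).encard + (J ∩ B).encard := by
    rw [← encard_union_add_encard_inter (J ∩ A) (J ∩ B), hJU, ← inter_inter_distrib_left]
    exact add_le_add_right (encard_mono (subset_inter hIJ hI.subset)) _
  exact h1.trans (add_le_add
    (encard_le_eRk (hJ.indep.subset inter_subset_left) inter_subset_right)
    (encard_le_eRk (hJ.indep.subset inter_subset_left) inter_subset_right))

lemma eRk_union_le (M : Matroid α) (X Y : Set α) :
    eRk M (X ∪ Y) ≤ eRk M X + eRk M Y := by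
  rw [eRk_inter_ground M (X ∪ Y), union_inter_distrib_right,
    eRk_inter_ground M X, eRk_inter_ground M Y]
  exact le_self_add.trans (eRk_submod M inter_subset_right inter_subset_right)

lemma ground_le_eRk_add (M : Matroid α) (X : Set α) :
    eRk M M.E ≤ eRk M X + eRk M (M.E \ X) := by
  have h : M.E = (X ∩ M.E) ∪ (M.E \ X) := by
    ext x; by_cases hx : x ∈ X <;> simp [hx]
  calc eRk M M.E = eRk M ((X ∩ M.E) ∪ (M.E \ X)) := by rw [← h]
    _ ≤ eRk M (X ∩ M.E) + eRk M (M.E \ X) := eRk_union_le M _ _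
    _ = eRk M X + eRk M (M.E \ X) := by rw [← eRk_inter_ground]

lemma lam_add (M : Matroid α) (X : Set α) :
    lam M X + eRk M M.E = eRk M X + eRk M (M.E \ X) :=
  tsub_add_cancel_of_le (ground_le_eRk_add M X)

lemma eRk_ground_base {M : Matroid α} {B : Set α} (hB : M.IsBase B) :
    eRk M M.E = B.encard :=
  eRk_basis (isBasis_ground_iff.2 hB)

lemma dual_eRk_add (M : Matroid α) {X : Set α} (hX : X ⊆ M.E) :
    eRk M✶ X + eRk M M.E = X.encard + eRk M (M.E \ X) := by
  obtain ⟨J, hJ⟩ := M.exists_isBasis (M.E \ X) diff_subset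
  obtain ⟨B, hB, hJB⟩ := hJ.indep.exists_isBase_superset
  have hBXJ : B \ X = J := by
    refine subset_antisymm ?_ (subset_diff.2 ⟨hJB, (subset_diff.1 hJ.subset).2⟩)
    rintro b ⟨hbB, hbX⟩
    by_contra hbJ
    have hbE : b ∈ M.E := hB.subset_ground hbB
    have h1 : b ∈ M.closure J := hJ.subset_closure ⟨hbE, hbX⟩
    have h2 : ¬ b ∈ M.closure (B \ {b}) := by
      rw [(hB.indep.subset diff_subset).notMem_closure_iff_of_notMem (by simp) hbE,
        insert_diff_singleton, insert_eq_of_mem hbB]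
      exact hB.indep
    exact h2 (M.closure_subset_closure (subset_diff_singleton hJB hbJ) h1)
  have h0 : eRk M M.E ≤ X.encard + eRk M (M.E \ X) :=
    (ground_le_eRk_add M X).trans (add_le_add_left (eRk_le_encard M X) _)
  refine le_antisymm ?_ ?_
  · by_cases htop : eRk M M.E = ⊤
    · calc eRk M✶ X + eRk M M.E ≤ ⊤ := le_top
        _ ≤ X.encard + eRk M (M.E \ X) := htop ▸ h0
    refine (add_le_add_left ?_ _).trans_eq (tsub_add_cancel_of_le h0)
    refine eRk_le_of_forall fun D hD hDX => ?_
    refine (WithTop.addLECancellable_of_ne_top htop).le_tsub_of_add_le_right ?_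
    obtain ⟨hDE, B', hB', hDB'⟩ := dual_indep_iff_exists'.1 hD
    rw [eRk_ground_base hB']
    calc D.encard + B'.encard = D.encard + ((B' ∩ X).encard + (B' \ X).encard) := by
          rw [add_comm (B' ∩ X).encard, encard_diff_add_encard_inter]
      _ = (D.encard + (B' ∩ X).encard) + (B' \ X).encard := by rw [add_assoc]
      _ ≤ X.encard + eRk M (M.E \ X) := by
          refine add_le_add ?_ (encard_le_eRk (hB'.indep.subset diff_subset)
            (diff_subset_diff_left hB'.subset_ground))
          rw [← encard_union_eq (hDB'.mono_right inter_subset_left)]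
          exact encard_mono (union_subset hDX inter_subset_right)
  · have hXB : M✶.Indep (X \ B) := by
      rw [dual_indep_iff_exists']
      exact ⟨diff_subset.trans hX, B, hB, disjoint_sdiff_left⟩
    calc X.encard + eRk M (M.E \ X) = X.encard + J.encard := by rw [eRk_basis hJ]
      _ = ((X \ B).encard + (X ∩ B).encard) + J.encard := by rw [encard_diff_add_encard_inter]
      _ = (X \ B).encard + ((B ∩ X).encard + (B \ X).encard) := by
          rw [add_assoc, inter_comm, hBXJ]
      _ = (X \ B).encard + B.encard := by
          rw [add_comm (B ∩ X).encard, encard_diff_add_encard_inter]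
      _ ≤ eRk M✶ X + eRk M M.E := by
          rw [eRk_ground_base hB]
          exact add_le_add_left (encard_le_eRk hXB diff_subset) _

lemma basis_inter_of_superset {M : Matroid α} {I C B : Set α} (hI : M.IsBasis I C)
    (hIB : I ⊆ B) (hB : M.Indep B) : B ∩ C = I :=
  (hI.eq_of_subset_indep (hB.subset inter_subset_left)
    (subset_inter hIB hI.subset) inter_subset_right).symm

lemma compl_basis_dual {M : Matroid α} {I B C : Set α} (hC : C ⊆ M.E)
    (hI : M.IsBasis I C) (hB : M.IsBase B) (hIB : I ⊆ B) :
    M✶.IsBasis ((M.E \ C) \ B) (M.E \ C) := by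
  have hKind : M✶.Indep ((M.E \ C) \ B) := by
    rw [dual_indep_iff_exists']
    exact ⟨diff_subset.trans diff_subset, B, hB, disjoint_sdiff_left⟩
  rw [isBasis_iff (by exact diff_subset : (M.E \ C) ⊆ M✶.E)]
  refine ⟨hKind, diff_subset, fun J hJ hKJ hJE' => ?_⟩
  refine subset_antisymm hKJ fun x hxJ => ?_
  by_contra hxK
  have hxE' : x ∈ M.E \ C := hJE' hxJ
  have hxB : x ∈ B := by
    by_contra hxB
    exact hxK ⟨hxE', hxB⟩
  obtain ⟨hJE, B₂, hB₂, hJB₂⟩ := dual_indep_iff_exists'.1 hJ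
  have hxI : x ∉ I := fun h => hxE'.2 (hI.subset h)
  have hIBx : I ⊆ B \ {x} := subset_diff_singleton hIB hxI
  have hsub : B₂ ⊆ M.closure (B \ {x}) := by
    intro y hy
    have hyJ : y ∉ J := fun h => disjoint_left.1 hJB₂ h hy
    have hyE : y ∈ M.E := hB₂.subset_ground hy
    by_cases hyC : y ∈ C
    · exact M.closure_subset_closure hIBx (hI.subset_closure hyC)
    · have hyB : y ∈ B := by
        by_contra hyB
        exact hyJ (hKJ ⟨⟨hyE, hyC⟩, hyB⟩)
      have hyx : y ≠ x := fun h => hyJ (h ▸ hxJ)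
      exact M.subset_closure (B \ {x}) (diff_subset.trans hB.subset_ground) ⟨hyB, hyx⟩
  have hxcl : x ∈ M.closure (B \ {x}) :=
    closure_subset_closure_of_subset_closure hsub (hB₂.closure_eq ▸ hxE'.1)
  have : ¬ x ∈ M.closure (B \ {x}) := by
    rw [(hB.indep.subset diff_subset).notMem_closure_iff_of_notMem (by simp) hxE'.1,
      insert_diff_singleton, insert_eq_of_mem hxB]
    exact hB.indep
  exact this hxcl

lemma con_ground (M : Matroid α) (C : Set α) : (con M C).E = M.E \ C := rfl

lemma con_indep_iff {M : Matroid α} {C J : Set α} (hC : C ⊆ M.E) :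
    (con M C).Indep J ↔ J ⊆ M.E \ C ∧ ∃ I, M.IsBasis I C ∧ M.Indep (J ∪ I) := by
  have hE' : M.E \ C ⊆ M✶.E := diff_subset
  have hdel : del M✶ C = M✶ ↾ (M.E \ C) := rfl
  have hcon : con M C = (M✶ ↾ (M.E \ C))✶ := rfl
  constructor
  · intro hJ
    obtain ⟨hJE, K, hK, hJK⟩ := dual_indep_iff_exists'.1 hJ
    rw [hdel, isBase_restrict_iff hE'] at hK
    obtain ⟨hKE, B0, hB0, hKB0⟩ := dual_indep_iff_exists'.1 hK.indep
    obtain ⟨I, hI⟩ := M.exists_isBasis C hC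
    have hCW : C ⊆ M.E \ K := subset_diff.2 ⟨hC, (subset_diff.1 hK.subset).2.symm⟩
    obtain ⟨B, hBW, hIB⟩ := hI.indep.subset_isBasis_of_subset (hI.subset.trans hCW) diff_subset
    have hB : M.IsBase B := by
      refine hBW.indep.isBase_of_ground_subset_closure ?_
      calc M.E = M.closure B0 := (hB0.closure_eq).symm
        _ ⊆ M.closure (M.E \ K) :=
            M.closure_subset_closure (subset_diff.2 ⟨hB0.subset_ground, hKB0.symm⟩)
        _ = M.closure B := hBW.closure_eq_closure.symm
    have hsub : (M.E \ C) \ K ⊆ B := by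
      rintro x ⟨hxE', hxK⟩
      by_contra hxB
      have hins : M✶.Indep (insert x K) := by
        rw [dual_indep_iff_exists']
        refine ⟨insert_subset (hE' hxE') hKE, B, hB, ?_⟩
        rw [Set.disjoint_left]
        rintro y hy hyB
        rcases mem_insert_iff.1 hy with rfl | hyK
        · exact hxB hyB
        · exact (subset_diff.1 hBW.subset).2.symm.ne_of_mem hyK hyB rfl
      have := hK.eq_of_subset_indep hins (subset_insert _ _)
        (insert_subset hxE' hK.subset)
      exact hxK (this ▸ mem_insert x K)
    have hJB : J ⊆ B := fun x hx =>
      hsub ⟨hJE hx, fun hxK => disjoint_left.1 hJK hx hxK⟩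
    exact ⟨hJE, I, hI, hBW.indep.subset (union_subset hJB hIB)⟩
  · rintro ⟨hJE', I, hI, hJI⟩
    obtain ⟨B, hB, hJIB⟩ := hJI.exists_isBase_superset
    have hIB : I ⊆ B := subset_union_right.trans hJIB
    have hK := compl_basis_dual hC hI hB hIB
    rw [hcon, dual_indep_iff_exists']
    refine ⟨hJE', (M.E \ C) \ B, ?_, ?_⟩
    · rw [isBase_restrict_iff hE']
      exact hK
    · exact disjoint_sdiff_right.mono_left (subset_union_left.trans hJIB)

lemma con_eRk_add {M : Matroid α} {C X : Set α} (hC : C ⊆ M.E) (hX : X ⊆ M.E \ C) :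
    eRk (con M C) X + eRk M C = eRk M (X ∪ C) := by
  obtain ⟨I, hI⟩ := M.exists_isBasis C hC
  refine le_antisymm ?_ ?_
  · have h0 : eRk M C ≤ eRk M (X ∪ C) := eRk_mono subset_union_right
    by_cases htop : eRk M (X ∪ C) = ⊤
    · exact htop ▸ le_top
    have htop2 : eRk M C ≠ ⊤ := fun h => htop (top_le_iff.1 (h ▸ h0))
    refine (add_le_add_left ?_ _).trans_eq (tsub_add_cancel_of_le h0)
    refine eRk_le_of_forall fun J hJ hJX => ?_
    refine (WithTop.addLECancellable_of_ne_top htop2).le_tsub_of_add_le_right ?_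
    obtain ⟨hJE', I₁, hI₁, hJI₁⟩ := (con_indep_iff hC).1 hJ
    have hdisj : Disjoint J I₁ :=
      ((subset_diff.1 hJE').2.mono_right hI₁.subset)
    calc J.encard + eRk M C = J.encard + I₁.encard := by rw [eRk_basis hI₁]
      _ = (J ∪ I₁).encard := (encard_union_eq hdisj).symm
      _ ≤ eRk M (X ∪ C) := encard_le_eRk hJI₁
          (union_subset (hJX.trans subset_union_left)
            (hI₁.subset.trans subset_union_right))
  · obtain ⟨B₂, hB₂, hIB₂⟩ := hI.indep.subset_isBasis_of_subset
      (hI.subset.trans subset_union_right)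
      (union_subset (hX.trans diff_subset) hC)
    have hBC : B₂ ∩ C = I := basis_inter_of_superset hI hIB₂ hB₂.indep
    have hJindep : (con M C).Indep (B₂ \ C) := by
      rw [con_indep_iff hC]
      refine ⟨diff_subset_diff_left hB₂.indep.subset_ground, I, hI, ?_⟩
      rw [← hBC, diff_union_inter]
      exact hB₂.indep
    have hJX : B₂ \ C ⊆ X := fun x hx => (hB₂.subset hx.1).elim (fun h => h)
      (fun h => absurd h hx.2)
    calc eRk M (X ∪ C) = B₂.encard := eRk_basis hB₂
      _ = (B₂ \ C).encard + (B₂ ∩ C).encard := (encard_diff_add_encard_inter _ _).symm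
      _ = (B₂ \ C).encard + eRk M C := by rw [hBC, eRk_basis hI]
      _ ≤ eRk (con M C) X + eRk M C :=
          add_le_add_left (encard_le_eRk hJindep hJX) _

lemma lam_submod (M : Matroid α) {A B : Set α} (hA : A ⊆ M.E) (hB : B ⊆ M.E)
    (hfin : eRk M M.E ≠ ⊤) :
    lam M (A ∪ B) + lam M (A ∩ B) ≤ lam M A + lam M B := by
  have hRR : eRk M M.E + eRk M M.E ≠ ⊤ := WithTop.add_ne_top.2 ⟨hfin, hfin⟩
  rw [← ENat.add_le_add_iff_right hRR]
  have e1 : lam M (A ∪ B) + lam M (A ∩ B) + (eRk M M.E + eRk M M.E)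
      = (eRk M (A ∪ B) + eRk M (M.E \ (A ∪ B))) + (eRk M (A ∩ B) + eRk M (M.E \ (A ∩ B))) := by
    rw [← lam_add M (A ∪ B), ← lam_add M (A ∩ B)]; ring
  have e2 : lam M A + lam M B + (eRk M M.E + eRk M M.E)
      = (eRk M A + eRk M (M.E \ A)) + (eRk M B + eRk M (M.E \ B)) := by
    rw [← lam_add M A, ← lam_add M B]; ring
  rw [e1, e2]
  have h1 : eRk M (A ∪ B) + eRk M (A ∩ B) ≤ eRk M A + eRk M B := eRk_submod M hA hB
  have h2 : eRk M (M.E \ (A ∪ B)) + eRk M (M.E \ (A ∩ B))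
      ≤ eRk M (M.E \ A) + eRk M (M.E \ B) := by
    have hu : M.E \ (A ∩ B) = (M.E \ A) ∪ (M.E \ B) := diff_inter
    have hi : M.E \ (A ∪ B) = (M.E \ A) ∩ (M.E \ B) := diff_inter_diff.symm
    rw [hu, hi, add_comm]
    exact eRk_submod M diff_subset diff_subset
  calc (eRk M (A ∪ B) + eRk M (M.E \ (A ∪ B))) + (eRk M (A ∩ B) + eRk M (M.E \ (A ∩ B)))
      = (eRk M (A ∪ B) + eRk M (A ∩ B)) + (eRk M (M.E \ (A ∪ B)) + eRk M (M.E \ (A ∩ B))) := by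
        ring
    _ ≤ (eRk M A + eRk M B) + (eRk M (M.E \ A) + eRk M (M.E \ B)) := add_le_add h1 h2
    _ = (eRk M A + eRk M (M.E \ A)) + (eRk M B + eRk M (M.E \ B)) := by ring

lemma con_RN_add {M : Matroid α} {e : α} (he : e ∈ M.E) :
    eRk (con M {e}) (M.E \ {e}) + eRk M {e} = eRk M M.E := by
  rw [con_eRk_add (singleton_subset_iff.2 he) (subset_refl _),
    diff_union_of_subset (singleton_subset_iff.2 he)]

lemma con_lam_add {M : Matroid α} {Y : Set α} {e : α} (he : e ∈ M.E)
    (hY : Y ⊆ M.E \ {e}) :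
    lam (con M {e}) Y + (eRk (con M {e}) (M.E \ {e}) + (eRk M {e} + eRk M {e}))
      = eRk M (insert e Y) + eRk M (M.E \ Y) := by
  have hE : {e} ⊆ M.E := singleton_subset_iff.2 he
  have heY : e ∉ Y := fun h => (hY h).2 rfl
  have h1 : eRk (con M {e}) Y + eRk M {e} = eRk M (insert e Y) := by
    rw [con_eRk_add hE hY, union_singleton]
  have h2 : eRk (con M {e}) ((M.E \ {e}) \ Y) + eRk M {e} = eRk M (M.E \ Y) := by
    rw [con_eRk_add hE diff_subset]
    congr 1
    ext x
    simp only [mem_union, mem_diff, mem_singleton_iff]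
    constructor
    · rintro (⟨⟨hxE, _⟩, hxY⟩ | rfl)
      · exact ⟨hxE, hxY⟩
      · exact ⟨he, heY⟩
    · rintro ⟨hxE, hxY⟩
      by_cases hxe : x = e
      · exact Or.inr hxe
      · exact Or.inl ⟨⟨hxE, hxe⟩, hxY⟩
  have h3 := lam_add (con M {e}) Y
  rw [con_ground] at h3
  calc lam (con M {e}) Y + (eRk (con M {e}) (M.E \ {e}) + (eRk M {e} + eRk M {e}))
      = (lam (con M {e}) Y + eRk (con M {e}) (M.E \ {e})) + eRk M {e} + eRk M {e} := by
        ring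
    _ = (eRk (con M {e}) Y + eRk (con M {e}) ((M.E \ {e}) \ Y)) + eRk M {e} + eRk M {e} := by
        rw [h3]
    _ = (eRk (con M {e}) Y + eRk M {e}) + (eRk (con M {e}) ((M.E \ {e}) \ Y) + eRk M {e}) := by
        ring
    _ = _ := by rw [h1, h2]

lemma con_lam_le {M : Matroid α} {Y : Set α} {e : α} (he : e ∈ M.E)
    (hY : Y ⊆ M.E \ {e}) (hfin : eRk M M.E ≠ ⊤) :
    lam (con M {e}) Y ≤ lam M Y := by
  set c := eRk M {e} with hc
  set RN := eRk (con M {e}) (M.E \ {e}) with hRN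
  have hRc : RN + c = eRk M M.E := con_RN_add he
  have hc1 : c ≤ 1 := (eRk_le_encard M {e}).trans_eq (encard_singleton e)
  have hcfin : c ≠ ⊤ := ne_top_of_le_ne_top (by simp) hc1
  have hRNfin : RN ≠ ⊤ := ne_top_of_le_ne_top hfin (hRc ▸ le_self_add)
  have hD : RN + (c + c) ≠ ⊤ :=
    WithTop.add_ne_top.2 ⟨hRNfin, WithTop.add_ne_top.2 ⟨hcfin, hcfin⟩⟩
  rw [← ENat.add_le_add_iff_right hD, con_lam_add he hY]
  have hrhs : lam M Y + (RN + (c + c)) = (eRk M Y + eRk M (M.E \ Y)) + c := by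
    calc lam M Y + (RN + (c + c)) = (lam M Y + eRk M M.E) + c := by rw [← hRc]; ring
      _ = (eRk M Y + eRk M (M.E \ Y)) + c := by rw [lam_add]
  rw [hrhs]
  have : eRk M (insert e Y) ≤ eRk M Y + c := by
    rw [← union_singleton]
    exact eRk_union_le M Y {e}
  calc eRk M (insert e Y) + eRk M (M.E \ Y) ≤ (eRk M Y + c) + eRk M (M.E \ Y) :=
        add_le_add_left this _
    _ = (eRk M Y + eRk M (M.E \ Y)) + c := by ring

lemma con_lam_key {M : Matroid α} {Z U : Set α} {e : α} {k : ℕ∞}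
    (hfin : eRk M M.E ≠ ⊤) (he : e ∈ M.E) (hU : U ⊆ M.E) (heU : e ∉ U) (hZU : Z ⊆ U)
    (h1 : k ≤ lam M Z) (h2 : lam (con M {e}) Z < k) (hlamU : lam M U = k) :
    lam (con M {e}) U < k := by
  set c := eRk M {e} with hc
  set RN := eRk (con M {e}) (M.E \ {e}) with hRN
  have hRc : RN + c = eRk M M.E := con_RN_add he
  have hc1 : c ≤ 1 := (eRk_le_encard M {e}).trans_eq (encard_singleton e)
  have hcfin : c ≠ ⊤ := ne_top_of_le_ne_top (by simp) hc1
  have hRNfin : RN ≠ ⊤ := ne_top_of_le_ne_top hfin (hRc ▸ le_self_add)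
  have hD : RN + (c + c) ≠ ⊤ :=
    WithTop.add_ne_top.2 ⟨hRNfin, WithTop.add_ne_top.2 ⟨hcfin, hcfin⟩⟩
  have hUE' : U ⊆ M.E \ {e} := subset_diff.2 ⟨hU, disjoint_singleton_right.2 heU⟩
  have hZE' : Z ⊆ M.E \ {e} := hZU.trans hUE'
  have hZE : Z ⊆ M.E := hZU.trans hU
  have hkfin : k ≠ ⊤ := by
    refine ne_top_of_le_ne_top ?_ (h1.trans tsub_le_self)
    exact WithTop.add_ne_top.2 ⟨ne_top_of_le_ne_top hfin (eRk_le_ground M Z),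
      ne_top_of_le_ne_top hfin (eRk_le_ground M (M.E \ Z))⟩
  -- step A : lam N Z + 1 ≤ lam M Z
  have hA : lam (con M {e}) Z + 1 ≤ lam M Z :=
    ((ENat.add_one_le_iff (h2.trans_le le_top).lt_top.ne).2 h2).trans h1
  -- step B : r (insert e Z) ≤ r Z, and 1 ≤ c
  have hB0 : (eRk M (insert e Z) + eRk M (M.E \ Z)) + 1
      ≤ (eRk M Z + eRk M (M.E \ Z)) + c := by
    have := add_le_add_left hA (RN + (c + c))
    have hL : lam (con M {e}) Z + 1 + (RN + (c + c))
        = (eRk M (insert e Z) + eRk M (M.E \ Z)) + 1 := by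
      rw [show lam (con M {e}) Z + 1 + (RN + (c + c))
        = lam (con M {e}) Z + (RN + (c + c)) + 1 by ring, con_lam_add he hZE']
    have hR : lam M Z + (RN + (c + c)) = (eRk M Z + eRk M (M.E \ Z)) + c := by
      calc lam M Z + (RN + (c + c)) = (lam M Z + eRk M M.E) + c := by rw [← hRc]; ring
        _ = (eRk M Z + eRk M (M.E \ Z)) + c := by rw [lam_add]
    rw [hL, hR] at this
    exact this
  have hEZfin : eRk M (M.E \ Z) ≠ ⊤ := ne_top_of_le_ne_top hfin (eRk_le_ground M _)
  have hrZ : eRk M (insert e Z) ≤ eRk M Z := by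
    have h' : eRk M (insert e Z) + (eRk M (M.E \ Z) + 1)
        ≤ eRk M Z + (eRk M (M.E \ Z) + 1) := by
      calc eRk M (insert e Z) + (eRk M (M.E \ Z) + 1)
          = (eRk M (insert e Z) + eRk M (M.E \ Z)) + 1 := by ring
        _ ≤ (eRk M Z + eRk M (M.E \ Z)) + c := hB0
        _ ≤ (eRk M Z + eRk M (M.E \ Z)) + 1 := add_le_add_right hc1 _
        _ = eRk M Z + (eRk M (M.E \ Z) + 1) := by ring
    exact (ENat.add_le_add_iff_right (show eRk M (M.E \ Z) + 1 ≠ ⊤ from WithTop.add_ne_top.2 ⟨hEZfin, ENat.one_ne_top⟩)).1 h'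
  have hZfin : eRk M Z ≠ ⊤ := ne_top_of_le_ne_top hfin (eRk_le_ground M _)
  have h1c : 1 ≤ c := by
    have h' : (eRk M Z + eRk M (M.E \ Z)) + 1 ≤ (eRk M Z + eRk M (M.E \ Z)) + c := by
      calc (eRk M Z + eRk M (M.E \ Z)) + 1
          ≤ (eRk M (insert e Z) + eRk M (M.E \ Z)) + 1 := by
            exact add_le_add_left (add_le_add_left (eRk_mono (subset_insert e Z)) _) _
        _ ≤ (eRk M Z + eRk M (M.E \ Z)) + c := hB0
    exact (ENat.add_le_add_iff_left (WithTop.add_ne_top.2 ⟨hZfin, hEZfin⟩)).1 h'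
  have hceq : c = 1 := le_antisymm hc1 h1c
  -- step D : r (insert e U) = r U
  have hUeq : eRk M (insert e U) = eRk M U := by
    have hsub := eRk_submod M (A := insert e Z) (B := U)
      (insert_subset he hZE) hU
    have hun : insert e Z ∪ U = insert e U := by
      ext x
      simp only [mem_union, mem_insert_iff]
      constructor
      · rintro ((rfl | hZ) | hU')
        · exact Or.inl rfl
        · exact Or.inr (hZU hZ)
        · exact Or.inr hU'
      · rintro (rfl | hU')
        · exact Or.inl (Or.inl rfl)
        · exact Or.inr hU'
    have hin : insert e Z ∩ U = Z := by
      ext x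
      simp only [mem_inter_iff, mem_insert_iff]
      constructor
      · rintro ⟨rfl | hZ, hU'⟩
        · exact absurd hU' heU
        · exact hZ
      · exact fun hZ => ⟨Or.inr hZ, hZU hZ⟩
    rw [hun, hin] at hsub
    refine le_antisymm ?_ (eRk_mono (subset_insert e U))
    have h' : eRk M (insert e U) + eRk M Z ≤ eRk M U + eRk M Z := by
      calc eRk M (insert e U) + eRk M Z ≤ eRk M (insert e Z) + eRk M U := hsub
        _ ≤ eRk M Z + eRk M U := add_le_add_left hrZ _
        _ = eRk M U + eRk M Z := by ring
    exact (ENat.add_le_add_iff_right hZfin).1 h'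
  -- step E : lam N U + 1 = k
  have hE : lam (con M {e}) U + 1 = k := by
    have h1' : lam (con M {e}) U + (RN + (c + c)) = eRk M U + eRk M (M.E \ U) := by
      rw [con_lam_add he hUE', hUeq]
    have h2' : eRk M U + eRk M (M.E \ U) = k + eRk M M.E := by
      rw [← lam_add, hlamU]
    have h3' : RN + (c + c) = eRk M M.E + 1 := by
      rw [show RN + (c + c) = (RN + c) + c by ring, hRc, hceq]
    have h4' : (lam (con M {e}) U + 1) + eRk M M.E = k + eRk M M.E := by
      calc (lam (con M {e}) U + 1) + eRk M M.E
          = lam (con M {e}) U + (eRk M M.E + 1) := by ring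
        _ = lam (con M {e}) U + (RN + (c + c)) := by rw [h3']
        _ = eRk M U + eRk M (M.E \ U) := h1'
        _ = k + eRk M M.E := h2'
    exact (ENat.add_le_add_iff_right hfin).1 h4'.le |>.antisymm
      ((ENat.add_le_add_iff_right hfin).1 h4'.ge)
  have hμUfin : lam (con M {e}) U ≠ ⊤ := by
    intro h
    rw [h] at hE
    exact hkfin (by simpa using hE.symm)
  exact (ENat.add_one_le_iff hμUfin).1 hE.le

lemma kap_le_lam {M : Matroid α} {S T X : Set α} (h1 : S ⊆ X) (h2 : X ⊆ M.E \ T) :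
    kap M S T ≤ lam M X :=
  iInf₂_le X ⟨h1, h2⟩

lemma le_kap {M : Matroid α} {S T : Set α} {c : ℕ∞}
    (h : ∀ X, S ⊆ X → X ⊆ M.E \ T → c ≤ lam M X) : c ≤ kap M S T :=
  le_iInf₂ fun X hX => h X hX.1 hX.2

lemma kap_mono {M : Matroid α} {S U T : Set α} (hSU : S ⊆ U) : kap M S T ≤ kap M U T :=
  le_kap fun _ h1 h2 => kap_le_lam (hSU.trans h1) h2

/-- `N` is a minor of `M` if `N = M / C \ D` for disjoint subsets `C, D` of `E(M)`. -/
def IsMinor (N M : Matroid α) : Prop :=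
  ∃ C D : Set α, C ⊆ M.E ∧ D ⊆ M.E ∧ Disjoint C D ∧ N = del (con M C) D

/-- `M` is representable over the field `𝔽` if its independent sets are exactly the
sets on which some vector-valued function is linearly independent. -/
def IsRepresentable (𝔽 : Type*) [Field 𝔽] (M : Matroid α) : Prop :=
  ∃ (B : Set α) (v : α → (B →₀ 𝔽)),
    ∀ I : Set α, M.Indep I ↔ I ⊆ M.E ∧ LinearIndependent 𝔽 (fun x : I ↦ v x)

end Intertwine

open Intertwine in
/-- If `U` is an `S−T`-separating set of order `k+1` and `e ∈ E(M) \ (T ∪ U)` is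
non-contractible with respect to `(S,T)`, then `κ_M(U,T) = k` and `e` is non-contractible
with respect to `(U,T)`. -/
theorem non_contractible_grow {α : Type*} (M : Matroid α)
    (S T : Set α) (hS : S ⊆ M.E) (hT : T ⊆ M.E) (hST : Disjoint S T)
    (k : ℕ∞) (hk : kap M S T = k)
    (U : Set α) (hU : U ⊆ M.E) (hSU : S ⊆ U) (hUT : Disjoint U T) (hlamU : lam M U = k)
    (e : α) (he : e ∈ M.E \ (T ∪ U)) (hnc : kap (con M {e}) S T < k) :
    kap M U T = k ∧ kap (con M {e}) U T < k := by
  by_cases hfin : Intertwine.eRk M M.E = ⊤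
  · exfalso
    have hk0 : k = 0 := by
      rw [← hlamU]
      show Intertwine.eRk M U + Intertwine.eRk M (M.E \ U) - Intertwine.eRk M M.E = 0
      rw [hfin]
      exact tsub_eq_zero_of_le le_top
    rw [hk0] at hnc
    simp at hnc
  have hkfin : k ≠ ⊤ := by
    rw [← hlamU]
    refine ne_top_of_le_ne_top (WithTop.add_ne_top.2
      ⟨ne_top_of_le_ne_top hfin (eRk_le_ground M U),
       ne_top_of_le_ne_top hfin (eRk_le_ground M (M.E \ U))⟩) ?_
    exact tsub_le_self.trans (add_le_add (le_refl _) (le_refl _))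
  obtain ⟨heE, heTU⟩ := he
  have heU : e ∉ U := fun h => heTU (Or.inr h)
  have hNE : (con M {e}).E = M.E \ {e} := con_ground M {e}
  have hUN : U ⊆ M.E \ {e} := subset_diff.2 ⟨hU, disjoint_singleton_right.2 heU⟩
  have hUcand : U ⊆ M.E \ T := subset_diff.2 ⟨hU, hUT⟩
  have part1 : kap M U T = k :=
    le_antisymm (hlamU ▸ kap_le_lam (subset_refl U) hUcand) (hk ▸ kap_mono hSU)
  refine ⟨part1, ?_⟩
  have hUNT : U ⊆ (con M {e}).E \ T := by
    rw [hNE]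
    exact subset_diff.2 ⟨hUN, hUT⟩
  have hex : ∃ X, (S ⊆ X ∧ X ⊆ (con M {e}).E \ T) ∧ lam (con M {e}) X < k := by
    by_contra hcon
    push_neg at hcon
    exact absurd (le_kap fun X h1 h2 => hcon X ⟨h1, h2⟩) (not_le_of_gt hnc)
  obtain ⟨X, ⟨hSX, hXT⟩, hlamX⟩ := hex
  have hZcand : k ≤ lam M (X ∩ U) :=
    hk ▸ kap_le_lam (subset_inter hSX hSU) (inter_subset_right.trans hUcand)
  by_cases hcase : lam (con M {e}) (X ∩ U) < k
  · have hkey := con_lam_key hfin heE hU heU inter_subset_right hZcand hcase hlamU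
    exact lt_of_le_of_lt (kap_le_lam (subset_refl U) hUNT) hkey
  · push_neg at hcase
    have hNfin : Intertwine.eRk (con M {e}) (con M {e}).E ≠ ⊤ := by
      rw [hNE]
      exact ne_top_of_le_ne_top hfin ((con_RN_add heE) ▸ le_self_add)
    have hXN : X ⊆ (con M {e}).E := hXT.trans diff_subset
    have hUNE : U ⊆ (con M {e}).E := by rw [hNE]; exact hUN
    have hsub := lam_submod (con M {e}) hXN hUNE hNfin
    have hμU : lam (con M {e}) U ≤ k := hlamU ▸ con_lam_le heE hUN hfin
    have hlt : lam (con M {e}) (X ∪ U) + k < k + k := by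
      calc lam (con M {e}) (X ∪ U) + k
          ≤ lam (con M {e}) (X ∪ U) + lam (con M {e}) (X ∩ U) := add_le_add_right hcase _
        _ ≤ lam (con M {e}) X + lam (con M {e}) U := hsub
        _ ≤ lam (con M {e}) X + k := add_le_add_right hμU _
        _ < k + k := (ENat.add_lt_add_iff_right hkfin).2 hlamX
    have hXU : lam (con M {e}) (X ∪ U) < k := by
      rwa [ENat.add_lt_add_iff_right hkfin] at hlt
    exact lt_of_le_of_lt (kap_le_lam subset_union_right (union_subset hXT hUNT)) hXU
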